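/- arXiv:2305.15626 — 5 statements merged into one kernel-verified Lean document; each statement's English description precedes it below -/
import Mathlib

section
/- Let a > 0 be a real number. For every x > 0 and all t₁, t₂ ∈ [−1, 1], one has (S_a(x)/8)·t₁² + Λ_a(x)·t₁t₂ + (K_a(x)/8)·t₂² + (S_a(x) − K_a(x))/24 > 0. -/
/-- `e^{2aξ₂}` times the scalar curvature of the Cao-type steady GKRS on `ℂ²`. -/
noncomputable def ScalS (a x : ℝ) : ℝ :=
  4 * a ^ 2 * (Real.exp (2 * a * x) - 1) / x

/-- `e^{2aξ₂}` times the conformal scalar curvature `κ_I`. -/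
noncomputable def ConfK (a x : ℝ) : ℝ :=
  4 * a ^ 2 * (Real.exp (2 * a * x) - 1) / x
    - 12 * a * (Real.exp (2 * a * x) + 1) / x ^ 2
    + 12 * (Real.exp (2 * a * x) - 1) / x ^ 3

/-- `e^{2aξ₂}` times the eigenvalue `λ` of the trace-free Ricci tensor. -/
noncomputable def LamΛ (a x : ℝ) : ℝ :=
  a ^ 2 * (Real.exp (2 * a * x) + 1) / x - a * (Real.exp (2 * a * x) - 1) / x ^ 2

lemma sinh_lt_mul_cosh {v : ℝ} (hv : 0 < v) : Real.sinh v < v * Real.cosh v := by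
  have h : StrictMonoOn (fun y => y * Real.cosh y - Real.sinh y) (Set.Ici 0) := by
    apply strictMonoOn_of_deriv_pos (convex_Ici _)
    · exact (continuous_id.mul Real.continuous_cosh).sub Real.continuous_sinh |>.continuousOn
    · intro y hy
      rw [interior_Ici, Set.mem_Ioi] at hy
      have hd : HasDerivAt (fun y => y * Real.cosh y - Real.sinh y) (y * Real.sinh y) y := by
        have h1 := (hasDerivAt_id y).mul (Real.hasDerivAt_cosh y)
        have h2 := h1.sub (Real.hasDerivAt_sinh y)
        have : 1 * Real.cosh y + id y * Real.sinh y - Real.cosh y = y * Real.sinh y := by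
          simp [id_eq]
        rwa [this] at h2
      rw [hd.deriv]
      exact mul_pos hy (Real.sinh_pos_iff.mpr hy)
  have := h (Set.self_mem_Ici) (Set.mem_Ici.mpr hv.le) hv
  simpa using this

lemma key_h {u : ℝ} (hu : 0 < u) : 2 * (Real.exp u - 1) < u * (Real.exp u + 1) := by
  have hv : 0 < u / 2 := by linarith
  have h := sinh_lt_mul_cosh hv
  rw [Real.sinh_eq, Real.cosh_eq] at h
  have he : Real.exp (u/2) * Real.exp (-(u/2)) = 1 := by
    rw [← Real.exp_add]; simp
  have hp : 0 < Real.exp (u/2) := Real.exp_pos _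
  have hE : Real.exp u = Real.exp (u/2) * Real.exp (u/2) := by
    rw [← Real.exp_add]; ring_nf
  nlinarith [mul_lt_mul_of_pos_left h hp]

lemma key_sq {u : ℝ} (hu : 0 < u) : u ^ 2 * Real.exp u < (Real.exp u - 1) ^ 2 := by
  have hv : 0 < u / 2 := by linarith
  have h := Real.self_lt_sinh_iff.mpr hv
  rw [Real.sinh_eq] at h
  have he : Real.exp (u/2) * Real.exp (-(u/2)) = 1 := by
    rw [← Real.exp_add]; simp
  have hp : 0 < Real.exp (u/2) := Real.exp_pos _
  have hE : Real.exp u = Real.exp (u/2) * Real.exp (u/2) := by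
    rw [← Real.exp_add]; ring_nf
  have h2 : u * Real.exp (u/2) < Real.exp u - 1 := by
    have := mul_lt_mul_of_pos_left h hp
    nlinarith
  have h3 : 0 < u * Real.exp (u/2) := mul_pos hu hp
  nlinarith [sq_nonneg (Real.exp u - 1 - u * Real.exp (u/2))]

set_option maxHeartbeats 1000000 in
/-- Positivity of the sectional curvature of the Cao-type steady gradient
Kähler–Ricci solitons on `ℂ²`. -/
theorem sectional_curvature_positive (a : ℝ) (ha : 0 < a) (x : ℝ) (hx : 0 < x)
    (t₁ t₂ : ℝ) (ht₁ : t₁ ∈ Set.Icc (-1 : ℝ) 1) (ht₂ : t₂ ∈ Set.Icc (-1 : ℝ) 1) :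
    0 < (ScalS a x / 8) * t₁ ^ 2 + LamΛ a x * t₁ * t₂ + (ConfK a x / 8) * t₂ ^ 2
          + (ScalS a x - ConfK a x) / 24 := by
  obtain ⟨h1l, h1r⟩ := ht₁
  obtain ⟨h2l, h2r⟩ := ht₂
  have hu : 0 < 2 * a * x := by positivity
  have hkey := key_sq hu
  have hhh := key_h hu
  set E := Real.exp (2 * a * x) with hEdef
  have hE : 1 < E := by
    have := Real.add_one_lt_exp (ne_of_gt hu)
    rw [← hEdef] at this
    linarith
  have hE1 : 0 < E - 1 := by linarith
  have hd : 0 < a * x * (E + 1) - (E - 1) := by nlinarith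
  set s : ℝ := a ^ 2 * x ^ 2 * (E - 1) / 2 with hs_def
  set c : ℝ := a * x * (a * x * (E + 1) - (E - 1)) with hc_def
  set k : ℝ := (4 * a ^ 2 * x ^ 2 * (E - 1) - 12 * a * x * (E + 1) + 12 * (E - 1)) / 8
    with hk_def
  set d : ℝ := a * x * (E + 1) - (E - 1) with hd_def
  have hs : 0 < s := by
    rw [hs_def]
    have := mul_pos (mul_pos (pow_pos ha 2) (pow_pos hx 2)) hE1
    linarith
  have hiden2 : 4 * s * (k + d / 2) - c ^ 2
      = a ^ 2 * x ^ 2 * ((E - 1) ^ 2 - (2 * a * x) ^ 2 * E) := by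
    rw [hs_def, hk_def, hd_def, hc_def]; ring
  have hpos : 0 < a ^ 2 * x ^ 2 * ((E - 1) ^ 2 - (2 * a * x) ^ 2 * E) :=
    mul_pos (by positivity) (by linarith)
  have hQ : 0 < s * t₁ ^ 2 + c * (t₁ * t₂) + k * t₂ ^ 2 + d / 2 := by
    rcases le_or_gt (c ^ 2) (4 * s * k) with hc2 | hc2
    · nlinarith [sq_nonneg (2 * s * t₁ + c * t₂),
        mul_nonneg (sub_nonneg.mpr hc2) (sq_nonneg t₂), mul_pos hs hd]
    · have ht2 : t₂ ^ 2 ≤ 1 := by nlinarith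
      have e1 : (4 * s * k - c ^ 2) * t₂ ^ 2 ≥ 4 * s * k - c ^ 2 := by
        nlinarith [mul_nonneg (sub_nonneg.mpr hc2.le) (sub_nonneg.mpr ht2)]
      have e2 : 4 * s * (s * t₁ ^ 2 + c * (t₁ * t₂) + k * t₂ ^ 2 + d / 2)
          = (2 * s * t₁ + c * t₂) ^ 2 + (4 * s * k - c ^ 2) * t₂ ^ 2 + 2 * s * d := by
        ring
      have e3 : 0 < 4 * s * (s * t₁ ^ 2 + c * (t₁ * t₂) + k * t₂ ^ 2 + d / 2) := by
        have := sq_nonneg (2 * s * t₁ + c * t₂)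
        linarith
      have h4s : (0:ℝ) < 4 * s := by linarith
      have := div_pos e3 h4s
      rwa [mul_div_cancel_left₀ _ (ne_of_gt h4s)] at this
  have hx3 : (0:ℝ) < x ^ 3 := by positivity
  have hident : x ^ 3 * ((ScalS a x / 8) * t₁ ^ 2 + LamΛ a x * t₁ * t₂
      + (ConfK a x / 8) * t₂ ^ 2 + (ScalS a x - ConfK a x) / 24)
      = s * t₁ ^ 2 + c * (t₁ * t₂) + k * t₂ ^ 2 + d / 2 := by
    rw [hs_def, hc_def, hk_def, hd_def]
    unfold ScalS ConfK LamΛ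
    rw [← hEdef]
    field_simp
    ring
  have hQ' : 0 < x ^ 3 * ((ScalS a x / 8) * t₁ ^ 2 + LamΛ a x * t₁ * t₂
      + (ConfK a x / 8) * t₂ ^ 2 + (ScalS a x - ConfK a x) / 24) := by
    rw [hident]; exact hQ
  have := div_pos hQ' hx3
  rwa [mul_div_cancel_left₀ _ (ne_of_gt hx3)] at this
end

section
/- Let a > 0 be a real number. For every x > 0 and every t ∈ [−1, 1], one has S_a(x)/6 − K_a(x)/24 + (K_a(x)/8)·t² + Λ_a(x)·t > 0. -/
lemma cubic_le_exp {u : ℝ} (hu : 0 ≤ u) : 1 + u + u ^ 2 / 2 + u ^ 3 / 6 ≤ Real.exp u := by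
  have h := Real.sum_le_exp_of_nonneg hu 4
  simp [Finset.sum_range_succ, Nat.factorial] at h
  linarith

lemma key_mono {b : ℝ} (hb : 0 ≤ b) : (1 - b) * Real.exp (2 * b) ≤ 1 + b := by
  set f : ℝ → ℝ := fun c => (1 + c) * Real.exp (-c) - (1 - c) * Real.exp c with hf
  have hderiv : ∀ c : ℝ, HasDerivAt f (c * (Real.exp c - Real.exp (-c))) c := by
    intro c
    have h1 : HasDerivAt (fun c : ℝ => Real.exp (-c)) (-Real.exp (-c)) c := by
      simpa [Function.comp_def] using ((Real.hasDerivAt_exp (-c)).comp c ((hasDerivAt_id c).neg))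
    have h2 : HasDerivAt (fun c : ℝ => (1 + c) * Real.exp (-c))
        (1 * Real.exp (-c) + (1 + c) * (-Real.exp (-c))) c := by
      simpa [Pi.add_def, Pi.mul_def] using ((hasDerivAt_const c (1:ℝ)).add (hasDerivAt_id c)).mul h1
    have h3 : HasDerivAt (fun c : ℝ => (1 - c) * Real.exp c)
        ((-1) * Real.exp c + (1 - c) * Real.exp c) c := by
      simpa [Pi.sub_def, Pi.mul_def] using ((hasDerivAt_const c (1:ℝ)).sub (hasDerivAt_id c)).mul (Real.hasDerivAt_exp c)
    have : HasDerivAt f _ c := h2.sub h3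
    convert this using 1
    ring
  have hmono : MonotoneOn f (Set.Ici (0:ℝ)) := by
    refine monotoneOn_of_deriv_nonneg (convex_Ici 0)
      (Continuous.continuousOn (by continuity))
      (fun c hc => (hderiv c).differentiableAt.differentiableWithinAt)
      (fun c hc => ?_)
    rw [interior_Ici] at hc
    rw [(hderiv c).deriv]
    have : Real.exp (-c) ≤ Real.exp c := Real.exp_le_exp.mpr (by linarith [hc.out])
    have hc0 : (0:ℝ) ≤ c := le_of_lt hc
    nlinarith
  have h0 : f 0 ≤ f b := hmono (Set.self_mem_Ici) (Set.mem_Ici.mpr hb) hb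
  simp [hf] at h0
  have hpos : 0 < Real.exp b := Real.exp_pos b
  have hexp2 : Real.exp (2 * b) = Real.exp b * Real.exp b := by
    rw [← Real.exp_add]; ring_nf
  have hinv : Real.exp (-b) * Real.exp b = 1 := by
    rw [← Real.exp_add]; simp
  nlinarith [mul_le_mul_of_nonneg_right h0 hpos.le]

set_option maxHeartbeats 1000000 in
/-- Positivity of the holomorphic sectional curvature of the Cao-type steady
gradient Kähler–Ricci solitons on `ℂ²`. -/
theorem holomorphic_sectional_curvature_positive (a : ℝ) (ha : 0 < a)
    (x : ℝ) (hx : 0 < x) (t : ℝ) (ht : t ∈ Set.Icc (-1 : ℝ) 1) :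
    0 < ScalS a x / 6 - ConfK a x / 24 + (ConfK a x / 8) * t ^ 2 + LamΛ a x * t := by
  obtain ⟨ht1, ht2⟩ := ht
  set y := Real.exp (2 * a * x) with hydef
  set b := a * x with hbdef
  have hb : 0 < b := mul_pos ha hx
  have hy : 1 + 2 * b + 2 * b ^ 2 + (4 / 3) * b ^ 3 ≤ y := by
    have h := cubic_le_exp (u := 2 * b) (by positivity)
    have : Real.exp (2 * b) = y := by rw [hydef, hbdef]; ring_nf
    rw [this] at h
    nlinarith [h]
  have h3 : 0 ≤ (b - 1) * y + b + 1 := by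
    have h := key_mono hb.le
    have : Real.exp (2 * b) = y := by rw [hydef, hbdef]; ring_nf
    rw [this] at h
    nlinarith [h]
  have h1 : 0 < 2 * b ^ 2 * y - 2 * b * y + y - 1 := by
    have hq : (0:ℝ) ≤ 2 * b ^ 2 - 2 * b + 1 := by nlinarith [sq_nonneg (2 * b - 1)]
    nlinarith [mul_nonneg hq (by linarith : (0:ℝ) ≤ y - (1 + 2 * b + 2 * b ^ 2 + (4/3) * b ^ 3)),
      pow_pos hb 3, pow_pos hb 4, pow_pos hb 5]
  have h2 : 0 < y - 1 - 2 * b ^ 2 - 2 * b := by nlinarith [pow_pos hb 3]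
  -- the scaled quadratic in t
  set Q : ℝ := (1/2) * a^2 * (y-1) * x^2 + (1/2) * a * (y+1) * x - (1/2) * (y-1)
      + (a^2 * (y+1) * x^2 - a * (y-1) * x) * t
      + ((1/2) * a^2 * (y-1) * x^2 - (3/2) * a * (y+1) * x + (3/2) * (y-1)) * t^2 with hQdef
  have hiden : 4 * Q = (2 * b ^ 2 * y - 2 * b * y + y - 1) * (1 + t)^2
      + (y - 1 - 2 * b ^ 2 - 2 * b) * (1 - t)^2
      + 4 * ((b - 1) * y + b + 1) * (1 - t^2) := by
    rw [hQdef, hbdef]; ring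
  have hQ : 0 < Q := by
    have hnn : 0 ≤ 4 * ((b - 1) * y + b + 1) * (1 - t^2) := by
      have : (0:ℝ) ≤ 1 - t^2 := by nlinarith
      positivity
    have h4 : 0 < (2 * b ^ 2 * y - 2 * b * y + y - 1) * (1 + t)^2
        + (y - 1 - 2 * b ^ 2 - 2 * b) * (1 - t)^2
        + 4 * ((b - 1) * y + b + 1) * (1 - t^2) := by
      rcases le_total 0 t with htp | htn
      · nlinarith [mul_nonneg h1.le (mul_nonneg htp (by linarith : (0:ℝ) ≤ t + 2)),
          mul_nonneg h2.le (sq_nonneg (1 - t))]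
      · nlinarith [mul_nonneg h2.le (mul_nonneg (by linarith : (0:ℝ) ≤ -t) (by linarith : (0:ℝ) ≤ 2 - t)),
          mul_nonneg h1.le (sq_nonneg (1 + t))]
    linarith [hiden, h4]
  have heq : ScalS a x / 6 - ConfK a x / 24 + (ConfK a x / 8) * t ^ 2 + LamΛ a x * t
      = Q / x ^ 3 := by
    rw [ScalS, ConfK, LamΛ, hQdef, hydef]
    field_simp
    ring
  rw [heq]
  exact div_pos hQ (pow_pos hx 3)
end

section
/- Let a > 0 be a real number. For every x > 0 one has 0 ≤ Λ_a(x) < S_a(x)/4; equivalently, 0 ≤ a²(e^{2ax} + 1)/x − a(e^{2ax} − 1)/x² < a²(e^{2ax} − 1)/x. -/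
lemma sinh_le_mul_cosh (u : ℝ) (hu : 0 ≤ u) : Real.sinh u ≤ u * Real.cosh u := by
  have h : MonotoneOn (fun u : ℝ => u * Real.cosh u - Real.sinh u) (Set.Ici 0) := by
    apply monotoneOn_of_deriv_nonneg (convex_Ici 0)
    · exact ((continuous_id.mul Real.continuous_cosh).sub Real.continuous_sinh).continuousOn
    · exact fun x hx => (((differentiableAt_fun_id.mul Real.differentiable_cosh.differentiableAt).sub
        Real.differentiable_sinh.differentiableAt)).differentiableWithinAt
    · intro x hx
      rw [interior_Ici, Set.mem_Ioi] at hx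
      have hd : deriv (fun u : ℝ => u * Real.cosh u - Real.sinh u) x = x * Real.sinh x := by
        rw [deriv_fun_sub, deriv_fun_mul] <;>
          simp [Real.deriv_cosh, Real.deriv_sinh, mul_comm] <;>
          first
          | exact differentiableAt_fun_id
          | exact Real.differentiable_cosh.differentiableAt
          | exact differentiableAt_fun_id.mul Real.differentiable_cosh.differentiableAt
          | exact Real.differentiable_sinh.differentiableAt
      rw [hd]
      exact mul_nonneg hx.le (Real.sinh_nonneg_iff.2 hx.le)
  have h0 := h (Set.self_mem_Ici) (Set.mem_Ici.2 hu) hu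
  simp at h0
  linarith

lemma exp_ineq (u : ℝ) (hu : 0 ≤ u) :
    Real.exp (2 * u) - 1 ≤ u * (Real.exp (2 * u) + 1) := by
  have h := sinh_le_mul_cosh u hu
  rw [Real.sinh_eq, Real.cosh_eq, Real.exp_neg] at h
  have he : 0 < Real.exp u := Real.exp_pos u
  have h2 : Real.exp u * Real.exp u = Real.exp (2 * u) := by
    rw [← Real.exp_add]; ring_nf
  have hinv : Real.exp u * (Real.exp u)⁻¹ = 1 := mul_inv_cancel₀ he.ne'
  nlinarith [mul_le_mul_of_nonneg_left h he.le, hinv, he]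

/-- Positivity of the Ricci curvature of the Cao-type steady gradient
Kähler–Ricci solitons on `ℂ²`: `0 ≤ Λ_a(x) < S_a(x)/4` for all `x > 0`. -/
theorem ricci_curvature_positive (a : ℝ) (ha : 0 < a) (x : ℝ) (hx : 0 < x) :
    0 ≤ LamΛ a x ∧ LamΛ a x < ScalS a x / 4 := by
  have hu : 0 ≤ a * x := le_of_lt (mul_pos ha hx)
  have h1 : Real.exp (2 * a * x) - 1 ≤ a * x * (Real.exp (2 * a * x) + 1) := by
    have := exp_ineq (a * x) hu
    ring_nf at this ⊢; linarith
  have h2 : 2 * (a * x) < Real.exp (2 * a * x) - 1 := by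
    have := Real.add_one_lt_exp (x := 2 * (a * x))
      (ne_of_gt (by positivity : (0:ℝ) < 2 * (a * x)))
    ring_nf at this ⊢; linarith
  have e1 : LamΛ a x = a / x ^ 2 *
      (a * x * (Real.exp (2 * a * x) + 1) - (Real.exp (2 * a * x) - 1)) := by
    unfold LamΛ; field_simp
  have e2 : ScalS a x / 4 - LamΛ a x = a / x ^ 2 *
      ((Real.exp (2 * a * x) - 1) - 2 * (a * x)) := by
    unfold ScalS LamΛ; field_simp; ring
  constructor
  · rw [e1]
    exact mul_nonneg (by positivity) (by linarith)
  · have : 0 < ScalS a x / 4 - LamΛ a x := by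
      rw [e2]; exact mul_pos (by positivity) (by linarith)
    linarith
end

section
/- For every real number y > 0, one has y²(e^y − 1) + 12(e^y − 1) > 6y(e^y + 1). -/
/-- Nonnegativity (in fact positivity for `x > 0`) of the conformal scalar
curvature of the Cao-type steady GKRS on `ℂ²`, reduced to a real inequality. -/
theorem conformal_scalar_curvature_pos (y : ℝ) (hy : 0 < y) :
    6 * y * (Real.exp y + 1) <
      y ^ 2 * (Real.exp y - 1) + 12 * (Real.exp y - 1) := by
  have h : ∑ i ∈ Finset.range 6, y ^ i / i.factorial ≤ Real.exp y :=
    Real.sum_le_exp_of_nonneg hy.le 6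
  simp [Finset.sum_range_succ, Nat.factorial] at h
  have hq : 0 < y ^ 2 - 6 * y + 12 := by nlinarith [sq_nonneg (y - 3)]
  nlinarith [mul_le_mul_of_nonneg_left h hq.le, pow_pos hy 5, pow_pos hy 7,
    pow_pos hy 6, sq_nonneg y, mul_pos (pow_pos hy 5) hq]
end

section
/- Let a > 0 be a real number and let ξ₁, ξ₂ be real numbers with 0 ≤ ξ₁ ≤ 1 ≤ ξ₂ and ξ₁ < ξ₂. Then 0 < (e^{−2aξ₁} − e^{−2aξ₂})/(ξ₂ − ξ₁) ≤ 1 − e^{−2a}. -/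
/-- Bounds on the scalar curvature of the Cao-type steady GKRS on `ℂ²`:
`0 < Scal_g ≤ 4a²(1 − e^{−2a})`, with the maximum at the origin. -/
theorem scalar_curvature_bounds (a ξ₁ ξ₂ : ℝ) (ha : 0 < a)
    (h₁ : 0 ≤ ξ₁) (h₂ : ξ₁ ≤ 1) (h₃ : 1 ≤ ξ₂) (h₄ : ξ₁ < ξ₂) :
    0 < (Real.exp (-(2 * a * ξ₁)) - Real.exp (-(2 * a * ξ₂))) / (ξ₂ - ξ₁) ∧
      (Real.exp (-(2 * a * ξ₁)) - Real.exp (-(2 * a * ξ₂))) / (ξ₂ - ξ₁) ≤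
        1 - Real.exp (-(2 * a)) := by
  set f : ℝ → ℝ := fun x => Real.exp (-(2 * a * x)) with hf
  have hconv : ConvexOn ℝ Set.univ f := by
    refine ⟨convex_univ, ?_⟩
    intro x _ y _ p q hp hq hpq
    have h := convexOn_exp.2 (Set.mem_univ (-(2 * a * x))) (Set.mem_univ (-(2 * a * y)))
      hp hq hpq
    simp only [smul_eq_mul, hf] at h ⊢
    rw [show -(2 * a * (p * x + q * y)) = p * -(2 * a * x) + q * -(2 * a * y) by ring]
    exact h
  have hd : 0 < ξ₂ - ξ₁ := by linarith
  have hnum : 0 < f ξ₁ - f ξ₂ := by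
    have : Real.exp (-(2 * a * ξ₂)) < Real.exp (-(2 * a * ξ₁)) :=
      Real.exp_lt_exp.2 (by nlinarith)
    simpa [hf] using sub_pos.2 this
  refine ⟨div_pos hnum hd, ?_⟩
  have key : (f 0 - f 1) / (0 - 1) ≤ (f ξ₂ - f ξ₁) / (ξ₂ - ξ₁) := by
    rcases eq_or_lt_of_le h₂ with rfl | hlt
    · exact hconv.secant_mono (Set.mem_univ (1:ℝ)) (Set.mem_univ 0) (Set.mem_univ ξ₂)
        (by norm_num) (ne_of_gt h₄) (by linarith)
    · have s1 := hconv.secant_mono (Set.mem_univ (1 : ℝ)) (Set.mem_univ 0)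
        (Set.mem_univ ξ₁) (by norm_num) (ne_of_lt hlt) h₁
      have s2 := hconv.secant_mono (Set.mem_univ ξ₁) (Set.mem_univ 1) (Set.mem_univ ξ₂)
        (ne_of_gt hlt) (ne_of_gt h₄) h₃
      have e1 : (f ξ₁ - f 1) / (ξ₁ - 1) = (f 1 - f ξ₁) / (1 - ξ₁) := by
        rw [← neg_div_neg_eq]; ring_nf
      calc (f 0 - f 1) / (0 - 1) ≤ (f ξ₁ - f 1) / (ξ₁ - 1) := s1
        _ = (f 1 - f ξ₁) / (1 - ξ₁) := e1
        _ ≤ (f ξ₂ - f ξ₁) / (ξ₂ - ξ₁) := s2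
  have hf0 : f 0 = 1 := by simp [hf]
  have hf1 : f 1 = Real.exp (-(2 * a)) := by simp [hf]
  have key' : Real.exp (-(2 * a)) - 1 ≤ (f ξ₂ - f ξ₁) / (ξ₂ - ξ₁) := by
    have : (f 0 - f 1) / (0 - 1) = f 1 - f 0 := by ring_nf
    rw [this, hf0, hf1] at key; linarith
  have key'' : (Real.exp (-(2 * a)) - 1) * (ξ₂ - ξ₁) ≤ f ξ₂ - f ξ₁ :=
    (le_div_iff₀ hd).1 key'
  rw [div_le_iff₀ hd]
  have : (Real.exp (-(2 * a * ξ₁)) - Real.exp (-(2 * a * ξ₂))) = -(f ξ₂ - f ξ₁) := by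
    simp [hf]
  rw [this]; nlinarith [key'']
end
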